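/- Let $\int_n$ denote the simplex iterated integral of $n$ polynomials. If $p,q_1,\dots,q_n$ are polynomials with $p(0)=0$ and $p(1)=0$, then $\int_{n+1} q_1\otimes\cdots\otimes q_n\otimes p' = -\int_n q_1\otimes\cdots\otimes (q_n p)$. -/

import Mathlib

open MeasureTheory

/-- The standard simplex `0 ≤ t_1 ≤ ⋯ ≤ t_n ≤ 1` in `ℝⁿ`. -/
def simplexSet (n : ℕ) : Set (Fin n → ℝ) :=
  {t | (∀ i, t i ∈ Set.Icc (0:ℝ) 1) ∧ Monotone t}

/-- The simplex iterated integral `∫ₙ p₁ ⊗ ⋯ ⊗ pₙ` of `n` polynomials. -/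
noncomputable def simplexInt (n : ℕ) (p : Fin n → Polynomial ℝ) : ℝ :=
  ∫ t in simplexSet n, ∏ i, (p i).eval (t i)

lemma simplexSet_isClosed (n : ℕ) : IsClosed (simplexSet n) := by
  have h1 : simplexSet n =
      {t : Fin n → ℝ | ∀ i, t i ∈ Set.Icc (0:ℝ) 1} ∩ {t | Monotone t} := rfl
  rw [h1]
  refine IsClosed.inter ?_ ?_
  · have : {t : Fin n → ℝ | ∀ i, t i ∈ Set.Icc (0:ℝ) 1} =
        ⋂ i, {t : Fin n → ℝ | t i ∈ Set.Icc (0:ℝ) 1} := by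
      ext t; simp
    rw [this]
    exact isClosed_iInter fun i => IsClosed.preimage (continuous_apply i) isClosed_Icc
  · have : {t : Fin n → ℝ | Monotone t} =
        ⋂ (i : Fin n) (j : Fin n) (_ : i ≤ j), {t : Fin n → ℝ | t i ≤ t j} := by
      ext t
      simp only [Set.mem_iInter, Set.mem_setOf_eq]
      exact ⟨fun h i j hij => h hij, fun h i j hij => h i j hij⟩
    rw [this]
    exact isClosed_iInter fun i => isClosed_iInter fun j => isClosed_iInter fun _ =>
      isClosed_le (continuous_apply i) (continuous_apply j)

lemma simplexSet_isCompact (n : ℕ) : IsCompact (simplexSet n) := by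
  have hsub : simplexSet n ⊆ Set.Icc (0 : Fin n → ℝ) 1 := by
    intro t ht
    constructor
    · intro i; exact (ht.1 i).1
    · intro i; exact (ht.1 i).2
  exact (isCompact_Icc).of_isClosed_subset (simplexSet_isClosed n) hsub

lemma snoc_mem_simplexSet_iff {m : ℕ} (u : Fin (m + 1) → ℝ) (s : ℝ) :
    Fin.snoc u s ∈ simplexSet (m + 2) ↔
      u ∈ simplexSet (m + 1) ∧ s ∈ Set.Icc (u (Fin.last m)) 1 := by
  constructor
  · rintro ⟨hIcc, hmono⟩
    have hs1 : s ≤ 1 := by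
      have := (hIcc (Fin.last (m + 1))).2
      rwa [Fin.snoc_last] at this
    have hs0 : u (Fin.last m) ≤ s := by
      have := hmono (Fin.le_last ((Fin.last m).castSucc))
      rwa [Fin.snoc_castSucc, Fin.snoc_last] at this
    refine ⟨⟨fun i => ?_, fun i j hij => ?_⟩, hs0, hs1⟩
    · have := hIcc i.castSucc; rwa [Fin.snoc_castSucc] at this
    · have := hmono (show (i.castSucc : Fin (m + 2)) ≤ j.castSucc by
        simpa [Fin.castSucc_le_castSucc_iff] using hij)
      rwa [Fin.snoc_castSucc, Fin.snoc_castSucc] at this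
  · rintro ⟨⟨hIcc, hmono⟩, hs0, hs1⟩
    constructor
    · intro i
      refine Fin.lastCases ?_ (fun j => ?_) i
      · rw [Fin.snoc_last]
        exact ⟨le_trans (hIcc (Fin.last m)).1 hs0, hs1⟩
      · rw [Fin.snoc_castSucc]; exact hIcc j
    · rw [Fin.monotone_iff_le_succ]
      intro i
      refine Fin.lastCases ?_ (fun j => ?_) i
      · rw [Fin.succ_last, Fin.snoc_castSucc, Fin.snoc_last]; exact hs0
      · rw [Fin.succ_castSucc, Fin.snoc_castSucc, Fin.snoc_castSucc]
        exact hmono (Fin.castSucc_lt_succ : j.castSucc < j.succ).le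

lemma prod_snoc_eval {m : ℕ} (q : Fin (m + 1) → Polynomial ℝ) (r : Polynomial ℝ)
    (u : Fin (m + 1) → ℝ) (s : ℝ) :
    (∏ i : Fin (m + 2), ((Fin.snoc q r : Fin (m + 2) → Polynomial ℝ) i).eval
        ((Fin.snoc u s : Fin (m + 2) → ℝ) i)) =
      (∏ i, (q i).eval (u i)) * r.eval s := by
  rw [Fin.prod_univ_castSucc]
  simp [mul_comm]

lemma prod_update_eval {m : ℕ} (q : Fin (m + 1) → Polynomial ℝ) (p : Polynomial ℝ)
    (u : Fin (m + 1) → ℝ) :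
    (∏ i, (Function.update q (Fin.last m) (q (Fin.last m) * p) i).eval (u i)) =
      (∏ i, (q i).eval (u i)) * p.eval (u (Fin.last m)) := by
  rw [Fin.prod_univ_castSucc, Fin.prod_univ_castSucc]
  have h1 : ∀ j : Fin m,
      Function.update q (Fin.last m) (q (Fin.last m) * p) j.castSucc = q j.castSucc := by
    intro j
    exact Function.update_of_ne (Fin.ne_of_lt (Fin.castSucc_lt_last j)) _ _
  simp only [h1, Function.update_self, Polynomial.eval_mul]
  ring

/-- If `p(0) = 0` and `p(1) = 0` then
`∫_{n+1} q₁ ⊗ ⋯ ⊗ qₙ ⊗ p' = - ∫ₙ q₁ ⊗ ⋯ ⊗ (qₙ p)`. -/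
theorem stmt_3 (n : ℕ) (p : Polynomial ℝ) (q : Fin (n + 1) → Polynomial ℝ)
    (hp0 : p.eval 0 = 0) (hp1 : p.eval 1 = 0) :
    simplexInt (n + 2) (Fin.snoc q (Polynomial.derivative p)) =
      - simplexInt (n + 1) (Function.update q (Fin.last n) (q (Fin.last n) * p)) := by
  classical
  set P : Fin (n + 2) → Polynomial ℝ := Fin.snoc q (Polynomial.derivative p) with hP
  set F : (Fin (n + 2) → ℝ) → ℝ := fun t => ∏ i, (P i).eval (t i) with hF
  have hFc : Continuous F := by
    apply continuous_finset_prod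
    intro i _
    exact (P i).continuous_aeval.comp (continuous_apply i)
  have hSm : MeasurableSet (simplexSet (n + 2)) := (simplexSet_isClosed _).measurableSet
  have hS'm : MeasurableSet (simplexSet (n + 1)) := (simplexSet_isClosed _).measurableSet
  have hInt : IntegrableOn F (simplexSet (n + 2)) :=
    hFc.continuousOn.integrableOn_compact (simplexSet_isCompact _)
  have hIndInt : Integrable ((simplexSet (n + 2)).indicator F) :=
    (integrable_indicator_iff hSm).2 hInt
  have hmp := volume_preserving_piFinSuccAbove (fun _ : Fin (n + 2) => ℝ) (Fin.last (n + 1))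
  set e := MeasurableEquiv.piFinSuccAbove (fun _ : Fin (n + 2) => ℝ) (Fin.last (n + 1)) with he
  have hsymm : ∀ (x : ℝ × (Fin (n + 1) → ℝ)), e.symm x = Fin.snoc x.2 x.1 := by
    intro x
    rw [MeasurableEquiv.piFinSuccAbove_symm_apply]
    exact Fin.insertNth_last' x.1 x.2
  have hIndInt' : Integrable (fun x : ℝ × (Fin (n + 1) → ℝ) =>
      (simplexSet (n + 2)).indicator F (Fin.snoc x.2 x.1)) := by
    have := ((MeasurePreserving.symm e hmp).integrable_comp_emb e.symm.measurableEmbedding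
      (g := (simplexSet (n + 2)).indicator F)).2 hIndInt
    refine this.congr ?_
    filter_upwards with x
    rw [Function.comp_apply, hsymm]
  -- the inner integral computation
  have key : ∀ u : Fin (n + 1) → ℝ,
      (∫ s : ℝ, (simplexSet (n + 2)).indicator F (Fin.snoc u s)) =
      (simplexSet (n + 1)).indicator
        (fun u => (∏ i, (q i).eval (u i)) * (-(p.eval (u (Fin.last n))))) u := by
    intro u
    by_cases hu : u ∈ simplexSet (n + 1)
    · have hind : ∀ s : ℝ, (simplexSet (n + 2)).indicator F (Fin.snoc u s) =
          (Set.Icc (u (Fin.last n)) 1).indicator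
            (fun s => (∏ i, (q i).eval (u i)) * (Polynomial.derivative p).eval s) s := by
        intro s
        by_cases hs : s ∈ Set.Icc (u (Fin.last n)) 1
        · rw [Set.indicator_of_mem ((snoc_mem_simplexSet_iff u s).2 ⟨hu, hs⟩),
            Set.indicator_of_mem hs]
          exact prod_snoc_eval q (Polynomial.derivative p) u s
        · rw [Set.indicator_of_notMem (fun hmem => hs ((snoc_mem_simplexSet_iff u s).1 hmem).2),
            Set.indicator_of_notMem hs]
      rw [Set.indicator_of_mem hu]
      simp only [hind]
      rw [integral_indicator measurableSet_Icc, integral_const_mul]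
      have hle : u (Fin.last n) ≤ 1 := (hu.1 (Fin.last n)).2
      have : (∫ s in Set.Icc (u (Fin.last n)) 1, (Polynomial.derivative p).eval s) =
          -(p.eval (u (Fin.last n))) := by
        rw [integral_Icc_eq_integral_Ioc, ← intervalIntegral.integral_of_le hle,
          intervalIntegral.integral_eq_sub_of_hasDerivAt (fun x _ => p.hasDerivAt x)
            ((Polynomial.derivative p).continuous_aeval.intervalIntegrable _ _), hp1]
        ring
      rw [this]
    · rw [Set.indicator_of_notMem hu]
      have hzero : ∀ s : ℝ, (simplexSet (n + 2)).indicator F (Fin.snoc u s) = 0 := by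
        intro s
        exact Set.indicator_of_notMem
          (fun hmem => hu ((snoc_mem_simplexSet_iff u s).1 hmem).1) _
      simp only [hzero, integral_zero]
  calc simplexInt (n + 2) P
      = ∫ t, (simplexSet (n + 2)).indicator F t := by
        rw [simplexInt, integral_indicator hSm]
    _ = ∫ x : ℝ × (Fin (n + 1) → ℝ), (simplexSet (n + 2)).indicator F (e.symm x) := by
        rw [(MeasurePreserving.symm e hmp).integral_comp e.symm.measurableEmbedding]
    _ = ∫ x : ℝ × (Fin (n + 1) → ℝ), (simplexSet (n + 2)).indicator F (Fin.snoc x.2 x.1) := by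
        simp only [hsymm]
    _ = ∫ u : Fin (n + 1) → ℝ, ∫ s : ℝ, (simplexSet (n + 2)).indicator F (Fin.snoc u s) := by
        exact MeasureTheory.integral_prod_symm _ hIndInt'
    _ = ∫ u : Fin (n + 1) → ℝ, (simplexSet (n + 1)).indicator
          (fun u => (∏ i, (q i).eval (u i)) * (-(p.eval (u (Fin.last n))))) u := by
        simp only [key]
    _ = ∫ u in simplexSet (n + 1), (∏ i, (q i).eval (u i)) * (-(p.eval (u (Fin.last n)))) :=
        integral_indicator hS'm
    _ = - simplexInt (n + 1) (Function.update q (Fin.last n) (q (Fin.last n) * p)) := by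
        rw [simplexInt, ← integral_neg]
        congr 1
        ext u
        rw [prod_update_eval]
        ring
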